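/- Approximation-inclusion for eDCNN versus shallow nets: under the hypotheses of the shallow-net representation theorem, the set of restricted eDCNNs with pooling, H^{s,R,d,0}_{L*} = { a·V(x) : a ∈ ℝ^n, bias parameters free } contains every shallow ReLU network x ↦ a·σ(Wx+θ) with n hidden units; hence dist(f, H^{s,R,d,0}_{L*}) ≤ dist(f, H_n) for every f ∈ C([0,1]^d), where H_n is the set of shallow ReLU nets with n hidden units and dist is sup-norm distance on [0,1]^d. -/

import Mathlib

/-- A sequence `w : ℤ → ℝ` is supported on `{0,…,s}`. -/
def SuppOn (s : ℕ) (w : ℤ → ℝ) : Prop :=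
  ∀ j : ℤ, (j < 0 ∨ (s : ℤ) < j) → w j = 0

/-- Zero-padded (full) convolution of sequences. -/
noncomputable def convSeq (w v : ℤ → ℝ) : ℤ → ℝ :=
  fun j => ∑ᶠ k : ℤ, w (j - k) * v k

/-- The indicator of coordinates `{1,…,m}`. -/
def onesV (m : ℕ) : ℤ → ℝ := fun j => if 1 ≤ j ∧ j ≤ (m : ℤ) then 1 else 0

/-- Restricted eDCNN layers with ReLU. -/
noncomputable def eDCNNRelu (s d : ℕ) (w : ℕ → ℤ → ℝ) (b : ℕ → ℝ) (x : ℤ → ℝ) :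
    ℕ → ℤ → ℝ
  | 0 => x
  | k + 1 => fun j =>
      max (convSeq (w k) (eDCNNRelu s d w b x k) j + onesV (d + (k + 1) * s) j * b k) 0

/-- Embedding of `ℝ^d` into `ℝ^ℤ` at coordinates `1,…,d`. -/
def embed (d : ℕ) (x : Fin d → ℝ) : ℤ → ℝ :=
  fun j => if h : 1 ≤ j ∧ j ≤ (d : ℤ) then x ⟨(j - 1).toNat, by omega⟩ else 0

/-- The unit cube `[0,1]^d`. -/
def cube (d : ℕ) : Set (Fin d → ℝ) := {x | ∀ i, x i ∈ Set.Icc (0 : ℝ) 1}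

/-- Sup-norm distance between two functions on the unit cube. -/
noncomputable def supDist (d : ℕ) (f g : (Fin d → ℝ) → ℝ) : ℝ :=
  sSup ((fun x => |f x - g x|) '' cube d)

/-- `dist(f, H) = inf_{g ∈ H} ‖f - g‖_{C([0,1]^d)}`. -/
noncomputable def distSet (d : ℕ) (f : (Fin d → ℝ) → ℝ)
    (H : Set ((Fin d → ℝ) → ℝ)) : ℝ :=
  sInf ((fun g => supDist d f g) '' H)

/-- Shallow ReLU networks with `n` hidden units. -/
def shallowSet (d n : ℕ) : Set ((Fin d → ℝ) → ℝ) :=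
  {h | ∃ (a : Fin n → ℝ) (W : Matrix (Fin n) (Fin d) ℝ) (θ : Fin n → ℝ),
    h = fun x => ∑ i, a i * max (W.mulVec x i + θ i) 0}

/-- Restricted eDCNNs with `L` layers and location-based pooling
(scale `d`, offset `0`): `a · (S_{d+Ls,d,0} ∘ σ ∘ C_L ∘ σ ∘ C^R_{L-1} ∘ ⋯)(x)`,
with filters supported on `{0,…,s}`, constant biases `b^k` for `k < L` and an
arbitrary final bias vector. -/
noncomputable def eSet (s d n L : ℕ) : Set ((Fin d → ℝ) → ℝ) :=
  {h | ∃ (a : Fin n → ℝ) (ws : ℕ → ℤ → ℝ) (b : ℕ → ℝ) (bL : ℤ → ℝ),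
    (∀ k, SuppOn s (ws k)) ∧
    h = fun x => ∑ i : Fin n, a i *
      max (convSeq (ws (L - 1)) (eDCNNRelu s d ws b (embed d x) (L - 1))
            ((((i : ℕ) + 1) * d : ℕ)) + bL ((((i : ℕ) + 1) * d : ℕ))) 0}

open Polynomial

/-- support contained in `Icc a b`. -/
def SuppIcc (a b : ℤ) (v : ℤ → ℝ) : Prop :=
  ∀ j : ℤ, (j < a ∨ b < j) → v j = 0

lemma suppIcc_of_le {a b a' b' : ℤ} {v : ℤ → ℝ} (h : SuppIcc a b v)
    (ha : a' ≤ a) (hb : b ≤ b') : SuppIcc a' b' v := by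
  intro j hj
  apply h
  omega

/-- Convolution as a finite sum over the support of the filter. -/
lemma conv_eq_sum_left {a b : ℤ} {w : ℤ → ℝ} (hw : SuppIcc a b w) (v : ℤ → ℝ) (j : ℤ) :
    convSeq w v j = ∑ t ∈ Finset.Icc a b, w t * v (j - t) := by
  have hsub : Function.support (fun k => w (j - k) * v k) ⊆ (Finset.Icc (j - b) (j - a) : Finset ℤ) := by
    intro k hk
    simp only [Function.mem_support, ne_eq] at hk
    have : w (j - k) ≠ 0 := fun h => hk (by rw [h, zero_mul])
    have h2 : ¬ (j - k < a ∨ b < j - k) := fun h => this (hw _ h)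
    simp only [Finset.coe_Icc, Set.mem_Icc]
    omega
  rw [convSeq, finsum_eq_sum_of_support_subset _ hsub]
  apply Finset.sum_nbij' (fun k => j - k) (fun t => j - t) <;>
    intros <;> simp_all [Finset.mem_Icc] <;> omega

lemma conv_eq_sum_right {a b : ℤ} {v : ℤ → ℝ} (hv : SuppIcc a b v) (w : ℤ → ℝ) (j : ℤ) :
    convSeq w v j = ∑ k ∈ Finset.Icc a b, w (j - k) * v k := by
  have hsub : Function.support (fun k => w (j - k) * v k) ⊆ (Finset.Icc a b : Finset ℤ) := by
    intro k hk
    simp only [Function.mem_support, ne_eq] at hk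
    have : v k ≠ 0 := fun h => hk (by rw [h, mul_zero])
    have h2 : ¬ (k < a ∨ b < k) := fun h => this (hv _ h)
    simp only [Finset.coe_Icc, Set.mem_Icc]
    omega
  rw [convSeq, finsum_eq_sum_of_support_subset _ hsub]

lemma conv_supp {a1 b1 a2 b2 : ℤ} {w v : ℤ → ℝ} (hw : SuppIcc a1 b1 w)
    (hv : SuppIcc a2 b2 v) : SuppIcc (a1 + a2) (b1 + b2) (convSeq w v) := by
  intro j hj
  rw [conv_eq_sum_right hv w j]
  apply Finset.sum_eq_zero
  intro k hk
  simp only [Finset.mem_Icc] at hk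
  have : w (j - k) = 0 := hw _ (by omega)
  rw [this, zero_mul]

lemma conv_add_right {a b : ℤ} {w : ℤ → ℝ} (hw : SuppIcc a b w) (v1 v2 : ℤ → ℝ) (j : ℤ) :
    convSeq w (fun i => v1 i + v2 i) j = convSeq w v1 j + convSeq w v2 j := by
  rw [conv_eq_sum_left hw _ j, conv_eq_sum_left hw v1 j, conv_eq_sum_left hw v2 j,
    ← Finset.sum_add_distrib]
  exact Finset.sum_congr rfl fun t _ => by ring

lemma conv_assoc {a1 b1 a2 b2 : ℤ} {w1 w2 : ℤ → ℝ} (hw1 : SuppIcc a1 b1 w1)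
    (hw2 : SuppIcc a2 b2 w2) (v : ℤ → ℝ) (j : ℤ) :
    convSeq w1 (convSeq w2 v) j = convSeq (convSeq w1 w2) v j := by
  have h12 : SuppIcc (a1 + a2) (b1 + b2) (convSeq w1 w2) := conv_supp hw1 hw2
  rw [conv_eq_sum_left hw1 _ j, conv_eq_sum_left h12 v j]
  have key : ∀ m ∈ Finset.Icc (a1 + a2) (b1 + b2),
      convSeq w1 w2 m * v (j - m) = ∑ t ∈ Finset.Icc a1 b1, w1 t * w2 (m - t) * v (j - m) := by
    intro m _
    rw [conv_eq_sum_left hw1 w2 m, Finset.sum_mul]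
  rw [Finset.sum_congr rfl key, Finset.sum_comm]
  apply Finset.sum_congr rfl
  intro t ht
  simp only [Finset.mem_Icc] at ht
  rw [conv_eq_sum_left hw2 v (j - t), Finset.mul_sum]
  have hmap : ∀ u ∈ Finset.Icc a2 b2, w1 t * (w2 u * v (j - t - u)) =
      w1 t * w2 ((u + t) - t) * v (j - (u + t)) := by
    intro u _; ring_nf
  rw [Finset.sum_congr rfl hmap]
  have step1 : ∑ u ∈ Finset.Icc a2 b2, w1 t * w2 (u + t - t) * v (j - (u + t)) =
      ∑ m ∈ Finset.Icc (a2 + t) (b2 + t), w1 t * w2 (m - t) * v (j - m) := by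
    apply Finset.sum_nbij' (fun u => u + t) (fun m => m - t) <;>
      intros <;> simp_all [Finset.mem_Icc] <;> omega
  rw [step1]
  apply Finset.sum_subset
  · intro m hm
    simp only [Finset.mem_Icc] at hm ⊢
    omega
  · intro m _ hm
    simp only [Finset.mem_Icc] at hm
    have : w2 (m - t) = 0 := hw2 _ (by omega)
    rw [this, mul_zero, zero_mul]

/-- The coefficient sequence of a polynomial, as a function `ℤ → ℝ`. -/
noncomputable def seqOf (p : ℝ[X]) : ℤ → ℝ :=
  fun j => if 0 ≤ j then p.coeff j.toNat else 0

lemma seqOf_supp (p : ℝ[X]) : SuppIcc 0 (p.natDegree) (seqOf p) := by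
  intro j hj
  rcases hj with h | h
  · simp [seqOf, not_le.2 h]
  · rcases le_or_gt 0 j with h0 | h0
    · simp only [seqOf, if_pos h0]
      apply Polynomial.coeff_eq_zero_of_natDegree_lt
      omega
    · simp [seqOf, not_le.2 h0]

lemma seqOf_mul (p q : ℝ[X]) (j : ℤ) :
    seqOf (p * q) j = convSeq (seqOf p) (seqOf q) j := by
  rcases lt_or_ge j 0 with hj | hj
  · rw [(seqOf_supp (p * q)) j (Or.inl hj)]
    exact (conv_supp (seqOf_supp p) (seqOf_supp q) j (Or.inl (by omega))).symm
  · rw [conv_eq_sum_left (seqOf_supp p) (seqOf q) j]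
    -- extend sum to Icc 0 M with M = max (natDegree p) j
    set M : ℤ := max (p.natDegree : ℤ) j with hM
    have hext : ∑ t ∈ Finset.Icc (0:ℤ) (p.natDegree), seqOf p t * seqOf q (j - t) =
        ∑ t ∈ Finset.Icc (0:ℤ) M, seqOf p t * seqOf q (j - t) := by
      apply Finset.sum_subset
      · intro t ht; simp only [Finset.mem_Icc] at ht ⊢; omega
      · intro t ht hnt
        simp only [Finset.mem_Icc] at ht hnt
        rw [(seqOf_supp p) t (by omega), zero_mul]
    rw [hext]
    have hext2 : ∑ t ∈ Finset.Icc (0:ℤ) j, seqOf p t * seqOf q (j - t) =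
        ∑ t ∈ Finset.Icc (0:ℤ) M, seqOf p t * seqOf q (j - t) := by
      apply Finset.sum_subset
      · intro t ht; simp only [Finset.mem_Icc] at ht ⊢; omega
      · intro t ht hnt
        simp only [Finset.mem_Icc] at ht hnt
        rw [(seqOf_supp q) (j - t) (by omega), mul_zero]
    rw [← hext2]
    have hrange : ∑ t ∈ Finset.Icc (0:ℤ) j, seqOf p t * seqOf q (j - t) =
        ∑ k ∈ Finset.range (j.toNat + 1), p.coeff k * q.coeff (j.toNat - k) := by
      refine Finset.sum_nbij' (i := fun t => t.toNat) (j := fun k => (k : ℤ)) ?_ ?_ ?_ ?_ ?_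
      · intro t ht; simp only [Finset.mem_Icc] at ht; simp only [Finset.mem_range]; omega
      · intro k hk; simp only [Finset.mem_range] at hk; simp only [Finset.mem_Icc]; omega
      · intro t ht; simp only [Finset.mem_Icc] at ht; show ((t.toNat : ℕ) : ℤ) = t; omega
      · intro k _; simp
      · intro t ht
        simp only [Finset.mem_Icc] at ht
        simp only [seqOf, if_pos (by omega : (0:ℤ) ≤ t), if_pos (by omega : (0:ℤ) ≤ j - t)]
        congr 2
        omega
    rw [hrange, seqOf, if_pos hj, Polynomial.coeff_mul,
      Finset.Nat.sum_antidiagonal_eq_sum_range_succ_mk]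

open Polynomial in
/-- Split off a factor of degree in `[s-1, s]` from a nonzero real polynomial of
degree at least `s-1`. -/
lemma split_factor (s : ℕ) (hs : 2 ≤ s) :
    ∀ N : ℕ, ∀ p : ℝ[X], p.natDegree ≤ N → p ≠ 0 → s - 1 ≤ p.natDegree →
    ∃ q r : ℝ[X], p = q * r ∧ s - 1 ≤ q.natDegree ∧ q.natDegree ≤ s := by
  intro N
  induction N with
  | zero => intro p hN _ hdeg; omega
  | succ N ih =>
    intro p hN hp0 hdeg
    have hdegpos : 0 < p.natDegree := by omega
    have hnu : ¬ IsUnit p := by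
      intro h
      have := Polynomial.natDegree_eq_zero_of_isUnit h
      omega
    obtain ⟨c, hc_irr, hc_dvd⟩ := WfDvdMonoid.exists_irreducible_factor hnu hp0
    obtain ⟨p', rfl⟩ := hc_dvd
    have hc0 : c ≠ 0 := hc_irr.ne_zero
    have hp'0 : p' ≠ 0 := fun h => hp0 (by rw [h, mul_zero])
    have hdegadd : (c * p').natDegree = c.natDegree + p'.natDegree :=
      Polynomial.natDegree_mul hc0 hp'0
    have hc1 : 1 ≤ c.natDegree := by
      rcases Nat.eq_zero_or_pos c.natDegree with h | h
      · exact absurd (Polynomial.isUnit_iff_degree_eq_zero.2 (by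
          rw [Polynomial.degree_eq_natDegree hc0, h]; rfl)) hc_irr.not_isUnit
      · exact h
    have hc2 : c.natDegree ≤ 2 := hc_irr.natDegree_le_two
    by_cases hrec : s - 1 ≤ p'.natDegree
    · obtain ⟨q, r, hqr, h1, h2⟩ := ih p' (by omega) hp'0 hrec
      exact ⟨q, c * r, by rw [hqr]; ring, h1, h2⟩
    · refine ⟨c * p', 1, (mul_one _).symm, hdeg, ?_⟩
      rw [hdegadd]
      omega

open Polynomial in
/-- Any real polynomial of degree ≤ L*(s-1) is a product of L polynomials of
degree ≤ s. -/
lemma group_factors (s : ℕ) (hs : 2 ≤ s) :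
    ∀ L : ℕ, 1 ≤ L → ∀ p : ℝ[X], p.natDegree ≤ L * (s - 1) →
    ∃ qs : List ℝ[X], qs.length = L ∧ (∀ q ∈ qs, q.natDegree ≤ s) ∧ qs.prod = p := by
  intro L
  induction L with
  | zero => omega
  | succ L ih =>
    intro _ p hdeg
    rcases Nat.eq_zero_or_pos L with rfl | hL
    · exact ⟨[p], rfl, by
        intro q hq
        simp only [List.mem_singleton] at hq
        subst hq
        omega, by simp⟩
    by_cases hsmall : p.natDegree ≤ L * (s - 1)
    · obtain ⟨qs, hlen, hdegs, hprod⟩ := ih hL p hsmall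
      refine ⟨1 :: qs, by simp [hlen], ?_, by simp [hprod]⟩
      intro q hq
      rcases List.mem_cons.1 hq with rfl | hq
      · simp
      · exact hdegs q hq
    · push_neg at hsmall
      have hp0 : p ≠ 0 := by
        intro h
        rw [h, Polynomial.natDegree_zero] at hsmall
        have h1 : 0 < s - 1 := by omega
        have h2 : 0 < L * (s - 1) := Nat.mul_pos hL h1
        omega
      have hge : s - 1 ≤ p.natDegree := by
        have h1 : s - 1 ≤ L * (s - 1) := Nat.le_mul_of_pos_left _ hL
        omega
      obtain ⟨q, r, hqr, h1, h2⟩ := split_factor s hs p.natDegree p le_rfl hp0 hge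
      have hq0 : q ≠ 0 := fun h => hp0 (by rw [hqr, h, zero_mul])
      have hr0 : r ≠ 0 := fun h => hp0 (by rw [hqr, h, mul_zero])
      have hadd : p.natDegree = q.natDegree + r.natDegree := by
        rw [hqr]; exact Polynomial.natDegree_mul hq0 hr0
      have hrdeg : r.natDegree ≤ L * (s - 1) := by
        have : p.natDegree ≤ (L + 1) * (s - 1) := hdeg
        have : (L + 1) * (s - 1) = L * (s - 1) + (s - 1) := by ring
        omega
      obtain ⟨qs, hlen, hdegs, hprod⟩ := ih hL r hrdeg
      refine ⟨q :: qs, by simp [hlen], ?_, by simp [hprod, hqr]⟩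
      intro q' hq'
      rcases List.mem_cons.1 hq' with rfl | hq'
      · exact h2
      · exact hdegs q' hq'

open Polynomial in
/-- Coefficients of a finite sum of monomials. -/
lemma coeff_sum_monomial {N : ℕ} (c : ℕ → ℝ) (m : ℕ) :
    (∑ t ∈ Finset.range N, monomial t (c t)).coeff m = if m < N then c m else 0 := by
  rw [Polynomial.finset_sum_coeff]
  rw [Finset.sum_congr rfl (fun t _ => Polynomial.coeff_monomial)]
  rw [Finset.sum_ite_eq' (Finset.range N) m c]
  simp [Finset.mem_range]

lemma onesV_supp (m : ℕ) : SuppIcc 1 (m : ℤ) (onesV m) := by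
  intro j hj
  simp only [onesV, ite_eq_right_iff, and_imp]
  intro h1 h2
  omega

lemma embed_supp (d : ℕ) (x : Fin d → ℝ) : SuppIcc 1 (d : ℤ) (embed d x) := by
  intro j hj
  simp only [embed]
  rw [dif_neg (by omega)]

lemma embed_nonneg {d : ℕ} {x : Fin d → ℝ} (hx : x ∈ cube d) (j : ℤ) :
    0 ≤ embed d x j := by
  simp only [embed]
  split
  · exact (hx _).1
  · exact le_refl 0

lemma embed_bound {d : ℕ} {x : Fin d → ℝ} (hx : x ∈ cube d) (j : ℤ) :
    |embed d x j| ≤ 1 := by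
  simp only [embed]
  split
  · rw [abs_of_nonneg (hx _).1]; exact (hx _).2
  · simp

/-- bound for convolution with a filter supported on `[0,s]`. -/
lemma conv_bound {s : ℕ} {w : ℤ → ℝ} (hw : SuppIcc 0 (s : ℤ) w) {v : ℤ → ℝ} {M : ℝ}
    (hv : ∀ j, |v j| ≤ M) (j : ℤ) :
    |convSeq w v j| ≤ (∑ t ∈ Finset.Icc (0:ℤ) (s : ℤ), |w t|) * M := by
  rw [conv_eq_sum_left hw v j]
  calc |∑ t ∈ Finset.Icc (0:ℤ) (s:ℤ), w t * v (j - t)|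
      ≤ ∑ t ∈ Finset.Icc (0:ℤ) (s:ℤ), |w t * v (j - t)| := Finset.abs_sum_le_sum_abs _ _
    _ ≤ ∑ t ∈ Finset.Icc (0:ℤ) (s:ℤ), |w t| * M := by
        apply Finset.sum_le_sum
        intro t _
        rw [abs_mul]
        exact mul_le_mul_of_nonneg_left (hv _) (abs_nonneg _)
    _ = (∑ t ∈ Finset.Icc (0:ℤ) (s:ℤ), |w t|) * M := by rw [Finset.sum_mul]

/-- Linear (no ReLU) analogue of `eDCNNRelu`. -/
noncomputable def linModel (s d : ℕ) (w : ℕ → ℤ → ℝ) (b : ℕ → ℝ) (x : ℤ → ℝ) :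
    ℕ → ℤ → ℝ
  | 0 => x
  | k + 1 => fun j =>
      convSeq (w k) (linModel s d w b x k) j + onesV (d + (k + 1) * s) j * b k

/-- convolution with the delta filter `seqOf 1`. -/
lemma conv_one (v : ℤ → ℝ) (j : ℤ) : convSeq (seqOf 1) v j = v j := by
  have hsupp : SuppIcc 0 0 (seqOf (1 : Polynomial ℝ)) := by
    have := seqOf_supp (1 : Polynomial ℝ)
    simpa using this
  rw [conv_eq_sum_left hsupp v j]
  simp [seqOf]

open Polynomial in
lemma shallow_rep (s d n : ℕ) (hs : 2 ≤ s) (hsd : s ≤ d) (hn : 1 ≤ n)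
    (a : Fin n → ℝ) (W : Matrix (Fin n) (Fin d) ℝ) (θ : Fin n → ℝ) :
    ∃ g ∈ eSet s d n ((n * d + s - 2) / (s - 1)),
      ∀ x ∈ cube d, g x = ∑ i, a i * max (W.mulVec x i + θ i) 0 := by
  have hd0 : 0 < d := by omega
  set L : ℕ := (n * d + s - 2) / (s - 1) with hL
  have hL1 : 1 ≤ L := by
    have hnd1 : 1 ≤ n * d := Nat.mul_pos (by omega) hd0
    have h1 : s - 1 ≤ n * d + s - 2 := by omega
    have := Nat.one_le_div_iff (by omega : 0 < s - 1) |>.2 h1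
    omega
  have hnd : n * d ≤ L * (s - 1) := by
    have hnd1 : 1 ≤ n * d := Nat.mul_pos (by omega) hd0
    have hq := Nat.div_add_mod (n * d + s - 2) (s - 1)
    have hr := Nat.mod_lt (n * d + s - 2) (by omega : 0 < s - 1)
    rw [← hL] at hq
    have hcomm : L * (s - 1) = (s - 1) * L := Nat.mul_comm _ _
    omega
  -- the coefficient function and target polynomial
  set vc : ℕ → ℝ := fun m =>
    if h : m < n * d then
      W ⟨m / d, by
        have := (Nat.div_lt_iff_lt_mul hd0).2 (by omega : m < n * d)
        omega⟩
        ⟨d - 1 - m % d, by have := Nat.mod_lt m hd0; omega⟩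
    else 0 with hvc
  set P : ℝ[X] := ∑ t ∈ Finset.range (n * d), monomial t (vc t) with hP
  have hPcoeff : ∀ m : ℕ, P.coeff m = if m < n * d then vc m else 0 :=
    fun m => coeff_sum_monomial vc m
  have hPdeg : P.natDegree ≤ L * (s - 1) := by
    rw [Polynomial.natDegree_le_iff_coeff_eq_zero]
    intro m hm
    rw [hPcoeff m, if_neg (by omega)]
  obtain ⟨qs, hlen, hdegs, hprod⟩ := group_factors s hs L hL1 P hPdeg
  -- filters
  set wpoly : ℕ → ℝ[X] := fun k => if h : k < L then qs.get ⟨k, by omega⟩ else 1 with hwpoly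
  have hwdeg : ∀ k, (wpoly k).natDegree ≤ s := by
    intro k
    simp only [hwpoly]
    split
    · exact hdegs _ (List.get_mem _ _)
    · simp
  set ws : ℕ → ℤ → ℝ := fun k => seqOf (wpoly k) with hwsdef
  have hws : ∀ k, SuppIcc 0 (s : ℤ) (ws k) := by
    intro k
    exact suppIcc_of_le (seqOf_supp (wpoly k)) le_rfl (by exact_mod_cast hwdeg k)
  have hSuppOn : ∀ k, SuppOn s (ws k) := fun k j hj => hws k j hj
  -- partial products
  set pp : ℕ → ℝ[X] := fun k => ∏ t ∈ Finset.range k, wpoly t with hpp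
  have hppsucc : ∀ k, pp (k + 1) = pp k * wpoly k := by
    intro k
    simp only [hpp]
    exact Finset.prod_range_succ _ _
  have hppL : pp L = P := by
    have htake : ∀ k, k ≤ L → (qs.take k).prod = pp k := by
      intro k
      induction k with
      | zero => intro _; simp [hpp]
      | succ k ih =>
        intro hk
        rw [List.prod_take_succ qs k (by omega), ih (by omega), hppsucc k]
        congr 1
        simp only [hwpoly]
        rw [dif_pos (by omega : k < L)]
        simp [List.get_eq_getElem]
    have := htake L le_rfl
    rw [← this]
    rw [← hlen, List.take_length, hprod]
  -- the constant C and biases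
  set C : ℝ := 1 + ∑ k ∈ Finset.range L, ∑ t ∈ Finset.Icc (0:ℤ) (s:ℤ), |ws k t| with hC
  have hsum_nonneg : ∀ k, 0 ≤ ∑ t ∈ Finset.Icc (0:ℤ) (s:ℤ), |ws k t| :=
    fun k => Finset.sum_nonneg fun t _ => abs_nonneg _
  have hC1 : 1 ≤ C := by
    have : 0 ≤ ∑ k ∈ Finset.range L, ∑ t ∈ Finset.Icc (0:ℤ) (s:ℤ), |ws k t| :=
      Finset.sum_nonneg fun k _ => hsum_nonneg k
    simp only [hC]
    linarith
  have hCk : ∀ k, k < L → ∑ t ∈ Finset.Icc (0:ℤ) (s:ℤ), |ws k t| ≤ C - 1 := by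
    intro k hk
    have := Finset.single_le_sum (f := fun k => ∑ t ∈ Finset.Icc (0:ℤ) (s:ℤ), |ws k t|)
      (fun k _ => hsum_nonneg k) (Finset.mem_range.2 hk)
    simp only [hC]
    linarith
  have h2C : (0:ℝ) < 2 * C := by linarith
  set b : ℕ → ℝ := fun k => C * (2 * C) ^ k with hb
  have hbpos : ∀ k, 0 < b k := fun k => mul_pos (by linarith) (pow_pos h2C k)
  -- the main induction
  have hmain : ∀ (x : Fin d → ℝ), x ∈ cube d → ∀ k : ℕ, k ≤ L - 1 →
      SuppIcc 1 ((d : ℤ) + k * s) (linModel s d ws b (embed d x) k) ∧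
      (∀ j, |linModel s d ws b (embed d x) k j| ≤ (2 * C) ^ k) ∧
      (∀ j, 0 ≤ linModel s d ws b (embed d x) k j) ∧
      (eDCNNRelu s d ws b (embed d x) k = linModel s d ws b (embed d x) k) ∧
      (∀ j, linModel s d ws b (embed d x) k j =
        convSeq (seqOf (pp k)) (embed d x) j + linModel s d ws b (fun _ => 0) k j) := by
    intro x hx k
    induction k with
    | zero =>
      intro _
      refine ⟨?_, ?_, ?_, rfl, ?_⟩
      · intro j hj
        exact embed_supp d x j (by omega)
      · intro j
        show |embed d x j| ≤ (2 * C) ^ 0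
        simpa using embed_bound hx j
      · intro j
        exact embed_nonneg hx j
      · intro j
        simp only [linModel, hpp]
        rw [Finset.range_zero, Finset.prod_empty, conv_one]
        ring
    | succ k ih =>
      intro hk1
      obtain ⟨ihA, ihB, ihC, ihD, ihE⟩ := ih (by omega)
      have hkL : k < L := by omega
      -- support of the convolution term
      have hconv_supp : SuppIcc 1 ((d : ℤ) + (k + 1) * s)
          (convSeq (ws k) (linModel s d ws b (embed d x) k)) := by
        have := conv_supp (hws k) ihA
        refine suppIcc_of_le this (by omega) (by push_cast; ring_nf; omega)
      have honesV : ∀ j : ℤ, (j < 1 ∨ ((d : ℤ) + (k+1)*s) < j) →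
          onesV (d + (k + 1) * s) j = 0 := by
        intro j hj
        apply onesV_supp
        push_cast
        omega
      have hA : SuppIcc 1 ((d : ℤ) + (k+1) * s) (linModel s d ws b (embed d x) (k+1)) := by
        intro j hj
        show convSeq (ws k) (linModel s d ws b (embed d x) k) j
          + onesV (d + (k + 1) * s) j * b k = 0
        rw [hconv_supp j (by exact_mod_cast hj), honesV j hj, zero_mul, add_zero]
      have hconvb : ∀ j, |convSeq (ws k) (linModel s d ws b (embed d x) k) j| ≤
          (C - 1) * (2 * C) ^ k := by
        intro j
        calc |convSeq (ws k) (linModel s d ws b (embed d x) k) j|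
            ≤ (∑ t ∈ Finset.Icc (0:ℤ) (s:ℤ), |ws k t|) * (2 * C) ^ k :=
              conv_bound (hws k) ihB j
          _ ≤ (C - 1) * (2 * C) ^ k :=
              mul_le_mul_of_nonneg_right (hCk k hkL) (le_of_lt (pow_pos h2C k))
      have honesV01 : ∀ j : ℤ, onesV (d + (k + 1) * s) j = 0 ∨
          onesV (d + (k + 1) * s) j = 1 := by
        intro j
        by_cases h : 1 ≤ j ∧ j ≤ ((d + (k+1)*s : ℕ) : ℤ)
        · right; exact if_pos h
        · left; simp only [onesV, if_neg h]
      have hB : ∀ j, |linModel s d ws b (embed d x) (k+1) j| ≤ (2 * C) ^ (k + 1) := by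
        intro j
        show |convSeq (ws k) (linModel s d ws b (embed d x) k) j
          + onesV (d + (k + 1) * s) j * b k| ≤ (2 * C) ^ (k + 1)
        have h1 := hconvb j
        have h2 : |onesV (d + (k + 1) * s) j * b k| ≤ b k := by
          rcases honesV01 j with h | h <;> rw [h]
          · simp [le_of_lt (hbpos k)]
          · rw [one_mul, abs_of_pos (hbpos k)]
        calc |convSeq (ws k) (linModel s d ws b (embed d x) k) j
              + onesV (d + (k + 1) * s) j * b k|
            ≤ |convSeq (ws k) (linModel s d ws b (embed d x) k) j|
              + |onesV (d + (k + 1) * s) j * b k| := abs_add_le _ _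
          _ ≤ (C - 1) * (2 * C) ^ k + C * (2 * C) ^ k := by
              have : b k = C * (2 * C) ^ k := rfl
              linarith
          _ ≤ (2 * C) ^ (k + 1) := by
              rw [pow_succ]
              have := pow_pos h2C k
              nlinarith
      have hCpos : ∀ j, 0 ≤ linModel s d ws b (embed d x) (k+1) j := by
        intro j
        show 0 ≤ convSeq (ws k) (linModel s d ws b (embed d x) k) j
          + onesV (d + (k + 1) * s) j * b k
        by_cases h : 1 ≤ j ∧ j ≤ ((d + (k+1)*s : ℕ) : ℤ)
        · have hone : onesV (d + (k + 1) * s) j = 1 := if_pos h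
          rw [hone, one_mul]
          have h1 := hconvb j
          have h2 : b k = C * (2 * C) ^ k := rfl
          have h3 := abs_le.1 h1
          have := pow_pos h2C k
          nlinarith
        · push_neg at h
          have hj : j < 1 ∨ ((d : ℤ) + (k+1)*s) < j := by
            push_cast at h ⊢
            omega
          rw [hconv_supp j hj, honesV j hj, zero_mul, add_zero]
      have hD : eDCNNRelu s d ws b (embed d x) (k+1) =
          linModel s d ws b (embed d x) (k+1) := by
        funext j
        show max (convSeq (ws k) (eDCNNRelu s d ws b (embed d x) k) j
          + onesV (d + (k + 1) * s) j * b k) 0 = _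
        rw [ihD]
        exact max_eq_left (hCpos j)
      have hE : ∀ j, linModel s d ws b (embed d x) (k+1) j =
          convSeq (seqOf (pp (k+1))) (embed d x) j
            + linModel s d ws b (fun _ => 0) (k+1) j := by
        intro j
        have hu : linModel s d ws b (embed d x) k = fun i =>
            convSeq (seqOf (pp k)) (embed d x) i + linModel s d ws b (fun _ => 0) k i :=
          funext ihE
        show convSeq (ws k) (linModel s d ws b (embed d x) k) j
            + onesV (d + (k + 1) * s) j * b k = _
        rw [hu, conv_add_right (hws k)]
        have hassoc : convSeq (ws k) (convSeq (seqOf (pp k)) (embed d x)) j =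
            convSeq (seqOf (pp (k+1))) (embed d x) j := by
          rw [conv_assoc (hws k) (seqOf_supp (pp k)), hppsucc k]
          have : convSeq (ws k) (seqOf (pp k)) = seqOf (pp k * wpoly k) := by
            funext i
            rw [mul_comm (pp k) (wpoly k), seqOf_mul]
          rw [this]
        show convSeq (ws k) (convSeq (seqOf (pp k)) (embed d x)) j
            + convSeq (ws k) (linModel s d ws b (fun _ => 0) k) j
            + onesV (d + (k + 1) * s) j * b k = _
        rw [hassoc]
        show _ = convSeq (seqOf (pp (k+1))) (embed d x) j
            + (convSeq (ws k) (linModel s d ws b (fun _ => 0) k) j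
              + onesV (d + (k + 1) * s) j * b k)
        ring
      exact ⟨hA, hB, hCpos, hD, hE⟩
  -- final bias
  set θv : ℤ → ℝ := fun j =>
    ∑ i : Fin n, (if j = ((((i:ℕ)+1) * d : ℕ) : ℤ) then θ i else 0) with hθv
  have hθv_at : ∀ i0 : Fin n, θv ((((i0:ℕ)+1) * d : ℕ) : ℤ) = θ i0 := by
    intro i0
    simp only [hθv]
    rw [Fintype.sum_eq_single i0]
    · rw [if_pos rfl]
    · intro i hi
      rw [if_neg]
      intro hc
      have : ((i0:ℕ)+1) * d = ((i:ℕ)+1) * d := by exact_mod_cast hc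
      have : (i0:ℕ) = (i:ℕ) := by
        have := Nat.eq_of_mul_eq_mul_right hd0 this
        omega
      exact hi (Fin.ext this).symm
  set bL : ℤ → ℝ := fun j =>
    θv j - convSeq (ws (L-1)) (linModel s d ws b (fun _ => 0) (L-1)) j with hbL
  -- the eDCNN function
  refine ⟨_, ⟨a, ws, b, bL, hSuppOn, rfl⟩, ?_⟩
  intro x hx
  apply Finset.sum_congr rfl
  intro i _
  congr 1
  congr 1
  obtain ⟨hA, hB, hC', hD, hE⟩ := hmain x hx (L-1) le_rfl
  rw [hD]
  have hu : linModel s d ws b (embed d x) (L-1) = fun j =>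
      convSeq (seqOf (pp (L-1))) (embed d x) j + linModel s d ws b (fun _ => 0) (L-1) j :=
    funext hE
  rw [hu, conv_add_right (hws (L-1))]
  have hassoc : ∀ j, convSeq (ws (L-1)) (convSeq (seqOf (pp (L-1))) (embed d x)) j =
      convSeq (seqOf P) (embed d x) j := by
    intro j
    rw [conv_assoc (hws (L-1)) (seqOf_supp (pp (L-1)))]
    have h1 : convSeq (ws (L-1)) (seqOf (pp (L-1))) = seqOf (pp (L-1) * wpoly (L-1)) := by
      funext i
      rw [mul_comm (pp (L-1)) (wpoly (L-1)), seqOf_mul]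
    rw [h1, ← hppsucc (L-1), show L - 1 + 1 = L by omega, hppL]
  rw [hassoc]
  simp only [hbL]
  rw [hθv_at i]
  have hkey : convSeq (seqOf P) (embed d x) ((((i:ℕ)+1) * d : ℕ) : ℤ) = W.mulVec x i := by
    rw [conv_eq_sum_right (embed_supp d x)]
    have hmv : W.mulVec x i = ∑ c : Fin d, W i c * x c := by
      simp [Matrix.mulVec, dotProduct]
    have hmv2 : W.mulVec x i = ∑ m ∈ Finset.range d,
        (fun m => if h : m < d then W i ⟨m, h⟩ * x ⟨m, h⟩ else 0) m := by
      rw [hmv, ← Fin.sum_univ_eq_sum_range]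
      apply Finset.sum_congr rfl
      intro c _
      simp only [dif_pos c.isLt, Fin.eta]
    rw [hmv2]
    refine Finset.sum_nbij' (i := fun (k : ℤ) => (k - 1).toNat)
      (j := fun (m : ℕ) => (m : ℤ) + 1) ?_ ?_ ?_ ?_ ?_
    · intro k hk
      simp only [Finset.mem_Icc] at hk
      simp only [Finset.mem_range]
      omega
    · intro m hm
      simp only [Finset.mem_range] at hm
      simp only [Finset.mem_Icc]
      omega
    · intro k hk
      simp only [Finset.mem_Icc] at hk
      beta_reduce
      omega
    · intro m hm
      simp only [Finset.mem_range] at hm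
      beta_reduce
      omega
    · intro k hk
      simp only [Finset.mem_Icc] at hk
      have hx1 : (k - 1).toNat < d := by omega
      simp only [dif_pos hx1]
      have hjk : (0:ℤ) ≤ ((((i:ℕ)+1) * d : ℕ) : ℤ) - k := by
        have : (0:ℤ) ≤ (i:ℕ) := by positivity
        push_cast
        nlinarith
      have hsOf : seqOf P (((((i:ℕ)+1) * d : ℕ) : ℤ) - k) =
          P.coeff (((((i:ℕ)+1) * d : ℕ) : ℤ) - k).toNat := by
        rw [seqOf, if_pos hjk]
      rw [hsOf]
      set m : ℕ := (((((i:ℕ)+1) * d : ℕ) : ℤ) - k).toNat with hm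
      have hexp : ((i:ℕ) + 1) * d = (i:ℕ) * d + d := by ring
      have hmeq : m = (i:ℕ) * d + (d - k.toNat) := by
        simp only [hm]
        omega
      have hmlt : m < n * d := by
        have hilt : (i:ℕ) < n := i.isLt
        have h1 : d - k.toNat < d := by omega
        calc m = (i:ℕ) * d + (d - k.toNat) := hmeq
          _ < (i:ℕ) * d + d := by omega
          _ = ((i:ℕ) + 1) * d := by ring
          _ ≤ n * d := Nat.mul_le_mul_right d (by omega)
      rw [hPcoeff m, if_pos hmlt]
      simp only [hvc]
      rw [dif_pos hmlt]
      have hdiv : m / d = (i:ℕ) := by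
        rw [hmeq, Nat.add_comm, Nat.add_mul_div_right _ _ hd0,
          Nat.div_eq_of_lt (by omega), Nat.zero_add]
      have hmod : m % d = d - k.toNat := by
        rw [hmeq, Nat.add_comm, Nat.add_mul_mod_self_right, Nat.mod_eq_of_lt (by omega)]
      have hemb : embed d x k = x ⟨(k - 1).toNat, by omega⟩ := by
        rw [embed]
        rw [dif_pos (⟨hk.1, hk.2⟩ : 1 ≤ k ∧ k ≤ (d:ℤ))]
      rw [hemb]
      congr 1
      · congr 1
        · exact Fin.ext (by simp [hdiv])
        · exact Fin.ext (by simp only [hmod]; omega)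
  rw [hkey]
  ring


/-- eDCNN versus shallow nets: the eDCNN class with `L* = ⌈nd/(s-1)⌉` layers
contains (on `[0,1]^d`) every shallow ReLU net with `n` hidden units, hence
`dist(f, H^{s,R,d,0}_{L*}) ≤ dist(f, H_n)` for every `f`. -/
theorem eDCNN_dist_le_shallow_dist (s d n : ℕ) (hs : 2 ≤ s) (hsd : s ≤ d)
    (hn : 1 ≤ n) :
    (∀ h ∈ shallowSet d n, ∃ g ∈ eSet s d n ((n * d + s - 2) / (s - 1)),
      ∀ x ∈ cube d, g x = h x) ∧
    (∀ f : (Fin d → ℝ) → ℝ,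
      distSet d f (eSet s d n ((n * d + s - 2) / (s - 1))) ≤
        distSet d f (shallowSet d n)) := by
  have part1 : ∀ h ∈ shallowSet d n, ∃ g ∈ eSet s d n ((n * d + s - 2) / (s - 1)),
      ∀ x ∈ cube d, g x = h x := by
    intro h hmem
    obtain ⟨a, W, θ, rfl⟩ := hmem
    obtain ⟨g, hg, heq⟩ := shallow_rep s d n hs hsd hn a W θ
    exact ⟨g, hg, fun x hx => heq x hx⟩
  refine ⟨part1, ?_⟩
  intro f
  unfold distSet
  apply csInf_le_csInf
  · refine ⟨0, ?_⟩
    rintro y ⟨g, _, rfl⟩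
    apply Real.sSup_nonneg
    rintro z ⟨x, _, rfl⟩
    exact abs_nonneg _
  · have hne : (shallowSet d n).Nonempty :=
      ⟨_, ⟨0, 0, 0, rfl⟩⟩
    exact hne.image _
  · rintro y ⟨h, hmem, rfl⟩
    obtain ⟨g, hg, heq⟩ := part1 h hmem
    refine ⟨g, hg, ?_⟩
    simp only [supDist]
    congr 1
    apply Set.image_congr
    intro x hx
    rw [heq x hx]
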